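/- Let φ : G → Fin k be a perfect coloring of H with parameter matrix A such that φ((y·z)·(y·z)·v) = φ(v) for every v ∈ X, and suppose that y·z is not a period of φ, i.e. φ(y·z·w) ≠ φ(w) for some w ∈ G. Then the set of perfect colorings of H with parameter matrix A is infinite. -/

import Mathlib

namespace HexGrid

/-- Relations of the hexagonal grid group: x² = y² = z² = (x·y·z)² = 1. -/
def hexRels : Set (FreeGroup (Fin 3)) :=
  {FreeGroup.of 0 * FreeGroup.of 0,
   FreeGroup.of 1 * FreeGroup.of 1,
   FreeGroup.of 2 * FreeGroup.of 2,
   FreeGroup.of 0 * FreeGroup.of 1 * FreeGroup.of 2 *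
     (FreeGroup.of 0 * FreeGroup.of 1 * FreeGroup.of 2)}

/-- The group `G = ⟨x, y, z ∣ x² = y² = z² = (x·y·z)² = 1⟩`. -/
abbrev G := PresentedGroup hexRels

/-- The generators of `G`. -/
def gen (i : Fin 3) : G := PresentedGroup.of i

def x : G := gen 0
def y : G := gen 1
def z : G := gen 2

lemma gen_mul_self (i : Fin 3) : gen i * gen i = 1 := by
  have h : FreeGroup.of i * FreeGroup.of i ∈ Subgroup.normalClosure hexRels :=
    Subgroup.subset_normalClosure (by fin_cases i <;> simp [hexRels])
  exact (QuotientGroup.eq_one_iff _).mpr h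

/-- The infinite hexagonal grid `H`: the Cayley graph of `G` with respect to `{x, y, z}`;
`u` and `v` are adjacent iff `v ∈ {u·x, u·y, u·z}`. -/
def H : SimpleGraph G where
  Adj u v := u ≠ v ∧ ∃ i : Fin 3, v = u * gen i
  symm := by
    constructor
    rintro u v ⟨hne, i, rfl⟩
    exact ⟨hne.symm, i, by rw [mul_assoc, gen_mul_self, mul_one]⟩
  loopless := by constructor; rintro u ⟨hne, -⟩; exact hne rfl

/-- `φ` is a perfect coloring of `H` with parameter matrix `A`: for every vertex `u` and
every color `j`, the number of neighbors of `u` in `H` colored `j` equals `A (φ u) j`. -/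
def IsPerfectColoring {k : ℕ} (φ : G → Fin k) (A : Matrix (Fin k) (Fin k) ℕ) : Prop :=
  ∀ u : G, ∀ j : Fin k, Set.ncard {v : G | H.Adj u v ∧ φ v = j} = A (φ u) j

/-- A matrix is tridiagonal if its entries vanish whenever the indices differ by more
than one. -/
def IsTridiagonal {k : ℕ} (A : Matrix (Fin k) (Fin k) ℕ) : Prop :=
  ∀ i j : Fin k, ((i : ℕ) + 1 < (j : ℕ) ∨ (j : ℕ) + 1 < (i : ℕ)) → A i j = 0

/-- Two colorings are equivalent if one is obtained from the other by composing with a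
graph automorphism of `H`. -/
def EquivColoring {k : ℕ} (φ ψ : G → Fin k) : Prop :=
  ∃ g : H ≃g H, ψ = fun v => φ (g v)

/-- The double (zigzag) line `X = {(y·z)ⁿ : n ∈ ℤ} ∪ {(y·z)ⁿ·x : n ∈ ℤ}`. -/
def Xline : Set G := {g : G | ∃ n : ℤ, g = (y * z) ^ n ∨ g = (y * z) ^ n * x}

/-! ### Auxiliary development -/

/-- Sign of a boolean: `false ↦ 1`, `true ↦ -1`. -/
def sg (e : Bool) : ℤ := cond e (-1) 1

/-- The concrete model group `ℤ² ⋊ C₂` for the hexagonal grid group. -/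
@[ext] structure MM where
  p : ℤ
  q : ℤ
  e : Bool
deriving DecidableEq

namespace MM

instance : One MM := ⟨⟨0, 0, false⟩⟩
instance : Mul MM := ⟨fun m n => ⟨m.p + sg m.e * n.p, m.q + sg m.e * n.q, xor m.e n.e⟩⟩
instance : Inv MM := ⟨fun m => ⟨-(sg m.e) * m.p, -(sg m.e) * m.q, m.e⟩⟩

lemma mul_def (m n : MM) :
    m * n = ⟨m.p + sg m.e * n.p, m.q + sg m.e * n.q, xor m.e n.e⟩ := rfl

lemma one_def : (1 : MM) = ⟨0, 0, false⟩ := rfl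

lemma sg_xor (a b : Bool) : sg (xor a b) = sg a * sg b := by
  cases a <;> cases b <;> simp [sg]

instance : Group MM :=
  Group.ofLeftAxioms
    (by
      rintro ⟨ap, aq, ae⟩ ⟨bp, bq, be⟩ ⟨cp, cq, ce⟩
      refine MM.ext ?_ ?_ ?_
      · show (ap + sg ae * bp) + sg (xor ae be) * cp = ap + sg ae * (bp + sg be * cp)
        rw [sg_xor]; ring
      · show (aq + sg ae * bq) + sg (xor ae be) * cq = aq + sg ae * (bq + sg be * cq)
        rw [sg_xor]; ring
      · show xor (xor ae be) ce = xor ae (xor be ce)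
        exact Bool.xor_assoc ae be ce)
    (by rintro ⟨ap, aq, ae⟩; simp [mul_def, one_def, sg])
    (by
      rintro ⟨ap, aq, ae⟩
      simp only [Inv.inv, mul_def, one_def]
      cases ae <;> simp [sg])

def mx : MM := ⟨0, 0, true⟩
def my : MM := ⟨1, 1, true⟩
def mz : MM := ⟨0, 1, true⟩

end MM

open MM in
private def fgen : Fin 3 → MM := ![mx, my, mz]

lemma fgen_rels : ∀ r ∈ hexRels, FreeGroup.lift fgen r = 1 := by
  intro r hr
  simp only [hexRels, Set.mem_insert_iff, Set.mem_singleton_iff] at hr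
  rcases hr with rfl | rfl | rfl | rfl <;>
    · simp only [map_mul, FreeGroup.lift_apply_of, fgen]
      decide

/-- The coordinate homomorphism. -/
def pi : G →* MM := PresentedGroup.toGroup fgen_rels

lemma pi_gen (i : Fin 3) : pi (gen i) = fgen i :=
  PresentedGroup.toGroup.of fgen_rels

lemma pi_x : pi x = MM.mx := by rw [show x = gen 0 from rfl, pi_gen]; rfl
lemma pi_y : pi y = MM.my := by rw [show y = gen 1 from rfl, pi_gen]; rfl
lemma pi_z : pi z = MM.mz := by rw [show z = gen 2 from rfl, pi_gen]; rfl

/-- abbreviations for the two basic translations -/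
noncomputable def aa : G := y * z
noncomputable def bb : G := z * x

lemma xx : x * x = 1 := gen_mul_self 0
lemma yy : y * y = 1 := gen_mul_self 1
lemma zz : z * z = 1 := gen_mul_self 2

lemma x_inv : x⁻¹ = x := inv_eq_of_mul_eq_one_right xx
lemma y_inv : y⁻¹ = y := inv_eq_of_mul_eq_one_right yy
lemma z_inv : z⁻¹ = z := inv_eq_of_mul_eq_one_right zz

lemma rel_sq : (x * y * z) * (x * y * z) = 1 := by
  have h : (FreeGroup.of 0 * FreeGroup.of 1 * FreeGroup.of 2) *
      (FreeGroup.of 0 * FreeGroup.of 1 * FreeGroup.of 2) ∈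
      Subgroup.normalClosure hexRels :=
    Subgroup.subset_normalClosure (by simp [hexRels])
  exact (QuotientGroup.eq_one_iff _).mpr h

lemma xyz_eq : x * (y * z) = z * (y * x) := by
  have h : (x * y * z)⁻¹ = x * y * z := inv_eq_of_mul_eq_one_right rel_sq
  calc x * (y * z) = x * y * z := by rw [mul_assoc]
    _ = (x * y * z)⁻¹ := h.symm
    _ = z⁻¹ * (y⁻¹ * x⁻¹) := by rw [mul_inv_rev, mul_inv_rev]
    _ = z * (y * x) := by rw [x_inv, y_inv, z_inv]

lemma aa_inv : aa⁻¹ = z * y := by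
  rw [aa, mul_inv_rev, y_inv, z_inv]

lemma bb_inv : bb⁻¹ = x * z := by
  rw [bb, mul_inv_rev, x_inv, z_inv]

lemma semiconj_a : SemiconjBy x aa aa⁻¹ := by
  show x * aa = aa⁻¹ * x
  rw [aa_inv]
  show x * (y * z) = z * y * x
  rw [xyz_eq, ← mul_assoc]

lemma semiconj_b : SemiconjBy x bb bb⁻¹ := by
  show x * bb = bb⁻¹ * x
  rw [bb_inv]
  show x * (z * x) = x * z * x
  rw [← mul_assoc]

lemma comm_ab : Commute aa bb := by
  show aa * bb = bb * aa
  calc aa * bb = y * (z * (z * x)) := by rw [aa, bb, mul_assoc]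
    _ = y * x := by rw [← mul_assoc z z x, zz, one_mul]
    _ = z * (z * (y * x)) := by rw [← mul_assoc z z _, zz, one_mul]
    _ = z * (x * (y * z)) := by rw [← xyz_eq]
    _ = bb * aa := by simp only [bb, aa, mul_assoc]

lemma x_aa_pow (t : ℤ) : x * aa ^ t = aa ^ (-t) * x := by
  have := (semiconj_a.zpow_right t).eq
  rw [this, inv_zpow, zpow_neg]

lemma x_bb_pow (t : ℤ) : x * bb ^ t = bb ^ (-t) * x := by
  have := (semiconj_b.zpow_right t).eq
  rw [this, inv_zpow, zpow_neg]

lemma comm_pow (s t : ℤ) : aa ^ s * bb ^ t = bb ^ t * aa ^ s :=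
  ((comm_ab.zpow_zpow s t).eq).symm ▸ (comm_ab.zpow_zpow s t).eq

/-- The inverse map, sending coordinates back into `G`. -/
noncomputable def rhoFun (m : MM) : G := aa ^ m.p * bb ^ m.q * (cond m.e x 1)

lemma rhoFun_mul (m n : MM) : rhoFun (m * n) = rhoFun m * rhoFun n := by
  obtain ⟨mp, mq, me⟩ := m
  obtain ⟨np, nq, ne⟩ := n
  cases me
  · have hmm : (⟨mp, mq, false⟩ * ⟨np, nq, ne⟩ : MM) = ⟨mp + np, mq + nq, ne⟩ := by
      simp [MM.mul_def, sg]
    rw [hmm]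
    simp only [rhoFun]
    calc aa ^ (mp + np) * bb ^ (mq + nq) * cond ne x 1
        = aa ^ mp * (aa ^ np * bb ^ mq) * bb ^ nq * cond ne x 1 := by
          rw [zpow_add, zpow_add]; group
      _ = aa ^ mp * (bb ^ mq * aa ^ np) * bb ^ nq * cond ne x 1 := by rw [comm_pow]
      _ = aa ^ mp * bb ^ mq * 1 * (aa ^ np * bb ^ nq * cond ne x 1) := by group
      _ = aa ^ mp * bb ^ mq * cond false x 1 * (aa ^ np * bb ^ nq * cond ne x 1) := by
          rw [Bool.cond_false]
  · have hmm : (⟨mp, mq, true⟩ * ⟨np, nq, ne⟩ : MM) = ⟨mp - np, mq - nq, !ne⟩ := by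
      simp [MM.mul_def, sg]; constructor <;> ring
    rw [hmm]
    simp only [rhoFun]
    have hx : x * (aa ^ np * bb ^ nq * cond ne x 1)
        = aa ^ (-np) * bb ^ (-nq) * (x * cond ne x 1) := by
      calc x * (aa ^ np * bb ^ nq * cond ne x 1)
          = (x * aa ^ np) * bb ^ nq * cond ne x 1 := by group
        _ = aa ^ (-np) * (x * bb ^ nq) * cond ne x 1 := by rw [x_aa_pow]; group
        _ = aa ^ (-np) * (bb ^ (-nq) * x) * cond ne x 1 := by rw [x_bb_pow]
        _ = _ := by group
    calc aa ^ (mp - np) * bb ^ (mq - nq) * cond (!ne) x 1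
        = aa ^ mp * (aa ^ (-np) * bb ^ mq) * bb ^ (-nq) * cond (!ne) x 1 := by
          rw [show mp - np = mp + -np by ring, show mq - nq = mq + -nq by ring,
            zpow_add, zpow_add]; group
      _ = aa ^ mp * (bb ^ mq * aa ^ (-np)) * bb ^ (-nq) * cond (!ne) x 1 := by rw [comm_pow]
      _ = aa ^ mp * bb ^ mq * (aa ^ (-np) * bb ^ (-nq) * cond (!ne) x 1) := by group
      _ = aa ^ mp * bb ^ mq * (aa ^ (-np) * bb ^ (-nq) * (x * cond ne x 1)) := by
          cases ne
          · simp only [Bool.not_false, cond, mul_one]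
          · simp only [Bool.not_true, cond, xx]
      _ = aa ^ mp * bb ^ mq * (x * (aa ^ np * bb ^ nq * cond ne x 1)) := by rw [hx]
      _ = aa ^ mp * bb ^ mq * cond true x 1 * (aa ^ np * bb ^ nq * cond ne x 1) := by
          show _ = aa ^ mp * bb ^ mq * x * (aa ^ np * bb ^ nq * cond ne x 1)
          group

/-- `rho` as a monoid hom. -/
noncomputable def rho : MM →* G := MonoidHom.mk' rhoFun rhoFun_mul

lemma rho_pi : ∀ g : G, rho (pi g) = g := by
  have h : (rho.comp pi) = MonoidHom.id G := by
    apply PresentedGroup.ext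
    intro i
    fin_cases i
    · show rho (pi x) = x
      rw [pi_x]
      show aa ^ (0:ℤ) * bb ^ (0:ℤ) * x = x
      simp
    · show rho (pi y) = y
      rw [pi_y]
      show aa ^ (1:ℤ) * bb ^ (1:ℤ) * x = y
      simp only [zpow_one]
      rw [aa, bb]
      calc y * z * (z * x) * x = y * (z * (z * (x * x))) := by group
        _ = y := by rw [xx, mul_one, zz, mul_one]
    · show rho (pi z) = z
      rw [pi_z]
      show aa ^ (0:ℤ) * bb ^ (1:ℤ) * x = z
      simp only [zpow_zero, zpow_one, one_mul]
      rw [bb, mul_assoc, xx, mul_one]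
  intro g
  exact DFunLike.congr_fun h g

lemma pi_inj : Function.Injective pi :=
  Function.LeftInverse.injective rho_pi

lemma pi_aa : pi aa = ⟨1, 0, false⟩ := by
  rw [aa, map_mul, pi_y, pi_z]; decide

lemma pi_bb : pi bb = ⟨0, 1, false⟩ := by
  rw [bb, map_mul, pi_z, pi_x]; decide

lemma pi_aa_mul (v : G) : pi (aa * v) = ⟨(pi v).p + 1, (pi v).q, (pi v).e⟩ := by
  rw [map_mul, pi_aa, MM.mul_def]
  obtain ⟨p, q, e⟩ := pi v
  simp [sg]; ring

/-- coordinates of right-multiplications for an even vertex -/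
lemma coord_xF {u : G} {p q : ℤ} (hu : pi u = ⟨p, q, false⟩) :
    pi (u * x) = ⟨p, q, true⟩ := by
  rw [map_mul, pi_x, hu, MM.mul_def]; simp [MM.mx, sg]

lemma coord_yF {u : G} {p q : ℤ} (hu : pi u = ⟨p, q, false⟩) :
    pi (u * y) = ⟨p + 1, q + 1, true⟩ := by
  rw [map_mul, pi_y, hu, MM.mul_def]; simp [MM.my, sg]

lemma coord_zF {u : G} {p q : ℤ} (hu : pi u = ⟨p, q, false⟩) :
    pi (u * z) = ⟨p, q + 1, true⟩ := by
  rw [map_mul, pi_z, hu, MM.mul_def]; simp [MM.mz, sg]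

lemma coord_xT {u : G} {p q : ℤ} (hu : pi u = ⟨p, q, true⟩) :
    pi (u * x) = ⟨p, q, false⟩ := by
  rw [map_mul, pi_x, hu, MM.mul_def]; simp [MM.mx, sg]

lemma coord_yT {u : G} {p q : ℤ} (hu : pi u = ⟨p, q, true⟩) :
    pi (u * y) = ⟨p - 1, q - 1, false⟩ := by
  rw [map_mul, pi_y, hu, MM.mul_def]; simp [MM.my, sg]; constructor <;> ring

lemma coord_zT {u : G} {p q : ℤ} (hu : pi u = ⟨p, q, true⟩) :
    pi (u * z) = ⟨p, q - 1, false⟩ := by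
  rw [map_mul, pi_z, hu, MM.mul_def]; simp [MM.mz, sg]; ring

/-- Key identity at even vertices: `a·(u·z) = u·y`. -/
lemma idF {u : G} {p q : ℤ} (hu : pi u = ⟨p, q, false⟩) :
    aa * (u * z) = u * y := by
  apply pi_inj
  rw [pi_aa_mul, coord_zF hu, coord_yF hu]

/-- Key identity at odd vertices: `a·(u·y) = u·z`. -/
lemma idT {u : G} {p q : ℤ} (hu : pi u = ⟨p, q, true⟩) :
    aa * (u * y) = u * z := by
  apply pi_inj
  rw [pi_aa_mul, coord_yT hu, coord_zT hu]
  simp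

lemma gen_ne_one (i : Fin 3) : gen i ≠ 1 := by
  intro h
  have : pi (gen i) = pi 1 := by rw [h]
  rw [pi_gen, map_one] at this
  fin_cases i <;> simp [fgen, MM.mx, MM.my, MM.mz, MM.one_def] at this

lemma x_ne_y : x ≠ y := by
  intro h
  have : pi x = pi y := by rw [h]
  simp [pi_x, pi_y, MM.mx, MM.my] at this

lemma x_ne_z : x ≠ z := by
  intro h
  have : pi x = pi z := by rw [h]
  simp [pi_x, pi_z, MM.mx, MM.mz] at this

lemma y_ne_z : y ≠ z := by
  intro h
  have : pi y = pi z := by rw [h]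
  simp [pi_y, pi_z, MM.my, MM.mz] at this

lemma adj_iff (u v : G) : H.Adj u v ↔ v = u * x ∨ v = u * y ∨ v = u * z := by
  constructor
  · rintro ⟨hne, i, rfl⟩
    fin_cases i
    · exact Or.inl rfl
    · exact Or.inr (Or.inl rfl)
    · exact Or.inr (Or.inr rfl)
  · have hne : ∀ i : Fin 3, u ≠ u * gen i := by
      intro i h
      apply gen_ne_one i
      have h' : u * 1 = u * gen i := by rw [mul_one]; exact h
      exact (mul_left_cancel h').symm
    rintro (rfl | rfl | rfl)
    · exact ⟨hne 0, 0, rfl⟩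
    · exact ⟨hne 1, 1, rfl⟩
    · exact ⟨hne 2, 2, rfl⟩

/-- The fundamental counting identity: for any coloring `ψ`, the number of neighbours of `u`
with colour `j` is the indicator sum over the three explicit neighbours. -/
lemma tripleCount {k : ℕ} (ψ : G → Fin k) (u : G) (j : Fin k) :
    {v : G | H.Adj u v ∧ ψ v = j}.ncard =
      ((if ψ (u * x) = j then 1 else 0) + (if ψ (u * y) = j then 1 else 0) +
        (if ψ (u * z) = j then 1 else 0) : ℕ) := by
  classical
  have hxy : u * x ≠ u * y := fun h => x_ne_y (mul_left_cancel h)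
  have hxz : u * x ≠ u * z := fun h => x_ne_z (mul_left_cancel h)
  have hyz : u * y ≠ u * z := fun h => y_ne_z (mul_left_cancel h)
  have hset : {v : G | H.Adj u v ∧ ψ v = j} =
      ↑((insert (u * x) (insert (u * y) ({u * z} : Finset G))).filter (fun v => ψ v = j)) := by
    ext v
    simp only [Set.mem_setOf_eq, Finset.coe_filter, Finset.mem_insert, Finset.mem_singleton,
      Set.mem_setOf_eq, adj_iff]
  rw [hset, Set.ncard_coe_finset]
  rw [Finset.filter_insert, Finset.filter_insert, Finset.filter_singleton]
  by_cases h1 : ψ (u * x) = j <;> by_cases h2 : ψ (u * y) = j <;> by_cases h3 : ψ (u * z) = j <;>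
    simp [h1, h2, h3, Finset.card_insert_of_notMem, hxy, hxz, hyz]

/-- Restated perfect coloring condition. -/
lemma perfect_iff {k : ℕ} (ψ : G → Fin k) (A : Matrix (Fin k) (Fin k) ℕ) :
    IsPerfectColoring ψ A ↔ ∀ u : G, ∀ j : Fin k,
      ((if ψ (u * x) = j then 1 else 0) + (if ψ (u * y) = j then 1 else 0) +
        (if ψ (u * z) = j then 1 else 0) : ℕ) = A (ψ u) j := by
  unfold IsPerfectColoring
  constructor
  · intro h u j; rw [← tripleCount]; exact h u j
  · intro h u j; rw [tripleCount]; exact h u j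

/-- The multiset rigidity lemma for 5 colours. -/
lemma pl {k : ℕ} (c0 c1 c2 c3 c4 : Fin k)
    (h1 : ∀ j, ((if c0 = j then 1 else 0) + (if c1 = j then 1 else 0) : ℕ) =
      (if c2 = j then 1 else 0) + (if c3 = j then 1 else 0))
    (h2 : ∀ j, ((if c1 = j then 1 else 0) + (if c2 = j then 1 else 0) : ℕ) =
      (if c3 = j then 1 else 0) + (if c4 = j then 1 else 0)) :
    c2 = c0 := by
  by_contra hne
  -- from h1 at c2 : c1 = c2 and c3 ≠ c2
  have A2 := h1 c2
  rw [if_neg (fun h => hne h.symm), if_pos rfl] at A2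
  have hc1 : c1 = c2 := by
    by_cases h : c1 = c2
    · exact h
    · rw [if_neg h] at A2; by_cases h3 : c3 = c2 <;> simp [h3] at A2
  have hc3 : c3 ≠ c2 := by
    intro h
    rw [if_pos hc1, if_pos h] at A2
    omega
  -- from h1 at c0 : c3 = c0
  have A0 := h1 c0
  rw [if_pos rfl, if_neg hne] at A0
  have hc30 : c3 = c0 := by
    by_cases h : c3 = c0
    · exact h
    · rw [if_neg h] at A0; omega
  -- from h2 at c1 : c3 = c1 (since c1 = c2, LHS = 2)
  have B1 := h2 c1
  rw [if_pos rfl, if_pos hc1.symm] at B1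
  have hc31 : c3 = c1 := by
    by_cases h : c3 = c1
    · exact h
    · rw [if_neg h] at B1
      by_cases h4 : c4 = c1 <;> simp [h4] at B1
  exact hc3 (hc31.trans hc1)

lemma sh1 (g v : G) : (aa * g) * v = aa * (g * v) := mul_assoc aa g v

lemma sh2 (g v : G) : (aa * (aa * g)) * v = aa * (aa * (g * v)) := by
  rw [mul_assoc, mul_assoc]

lemma coord_aa {u : G} {p q : ℤ} {e : Bool} (hu : pi u = ⟨p, q, e⟩) :
    pi (aa * u) = ⟨p + 1, q, e⟩ := by rw [pi_aa_mul, hu]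

section PeriodLemma

variable {k : ℕ} {φ : G → Fin k} {A : Matrix (Fin k) (Fin k) ℕ}

/-- Upward propagation to odd vertices. -/
lemma step_up_T
    (hT : ∀ u : G, ∀ j : Fin k,
      ((if φ (u * x) = j then 1 else 0) + (if φ (u * y) = j then 1 else 0) +
        (if φ (u * z) = j then 1 else 0) : ℕ) = A (φ u) j)
    (n : ℤ) (hPn : ∀ v : G, (pi v).q = n → φ (aa * (aa * v)) = φ v) :
    ∀ w : G, (pi w).q = n + 1 → (pi w).e = true → φ (aa * (aa * w)) = φ w := by
  intro w hq he
  have hw : pi w = ⟨(pi w).p, n + 1, true⟩ := by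
    refine MM.ext rfl hq he
  set u : G := w * z with hu_def
  have hu : pi u = ⟨(pi w).p, n, false⟩ := by
    rw [hu_def, coord_zT hw]; simp
  have hwu : w = u * z := by rw [hu_def, mul_assoc, zz, mul_one]
  set u1 : G := aa * u with hu1_def
  set u2 : G := aa * u1 with hu2_def
  set u3 : G := aa * u2 with hu3_def
  have hu1 : pi u1 = ⟨(pi w).p + 1, n, false⟩ := coord_aa hu
  have hu2 : pi u2 = ⟨(pi w).p + 1 + 1, n, false⟩ := coord_aa hu1
  have hu3 : pi u3 = ⟨(pi w).p + 1 + 1 + 1, n, false⟩ := coord_aa hu2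
  -- colour sequence on the row above
  set d0 := φ (u * z) with hd0
  set d1 := φ (aa * (u * z)) with hd1
  set d2 := φ (aa * (aa * (u * z))) with hd2
  set d3 := φ (aa * (aa * (aa * (u * z)))) with hd3
  set d4 := φ (aa * (aa * (aa * (aa * (u * z))))) with hd4
  -- identities expressing neighbours via the d-sequence
  have r0 : φ (u * y) = d1 := by rw [hd1, ← idF hu]
  have r1 : φ (u1 * z) = d1 := by rw [hd1, hu1_def, sh1]
  have r1y : φ (u1 * y) = d2 := by
    rw [hd2, ← idF hu1, hu1_def, sh1]
  have r2 : φ (u2 * z) = d2 := by rw [hd2, hu2_def, hu1_def, sh1, sh1]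
  have r2y : φ (u2 * y) = d3 := by
    rw [hd3, ← idF hu2, hu2_def, hu1_def, sh1, sh1]
  have r3 : φ (u3 * z) = d3 := by rw [hd3, hu3_def, hu2_def, hu1_def, sh1, sh1, sh1]
  have r3y : φ (u3 * y) = d4 := by
    rw [hd4, ← idF hu3, hu3_def, hu2_def, hu1_def, sh1, sh1, sh1]
  -- periodicity of the base row
  have pu : φ u2 = φ u := by
    rw [hu2_def, hu1_def]; exact hPn u (by rw [hu])
  have pu13 : φ u3 = φ u1 := by
    rw [hu3_def, hu2_def]; exact hPn u1 (by rw [hu1])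
  have pux : φ (u2 * x) = φ (u * x) := by
    rw [hu2_def, hu1_def, sh2]
    exact hPn (u * x) (by rw [coord_xF hu])
  have pux13 : φ (u3 * x) = φ (u1 * x) := by
    rw [hu3_def, hu2_def, sh2]
    exact hPn (u1 * x) (by rw [coord_xF hu1])
  -- the two multiset conditions
  have E0 : ∀ j, ((if d0 = j then 1 else 0) + (if d1 = j then 1 else 0) : ℕ) =
      (if d2 = j then 1 else 0) + (if d3 = j then 1 else 0) := by
    intro j
    have h1 := hT u j
    have h2 := hT u2 j
    rw [r0, ← hd0] at h1
    rw [r2y, r2, pux, pu] at h2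
    omega
  have E1 : ∀ j, ((if d1 = j then 1 else 0) + (if d2 = j then 1 else 0) : ℕ) =
      (if d3 = j then 1 else 0) + (if d4 = j then 1 else 0) := by
    intro j
    have h1 := hT u1 j
    have h2 := hT u3 j
    rw [r1y, r1] at h1
    rw [r3y, r3, pux13, pu13] at h2
    omega
  have hkey : d2 = d0 := pl d0 d1 d2 d3 d4 E0 E1
  rw [hwu]
  exact hkey

/-- Upward propagation to even vertices. -/
lemma step_up_F
    (hT : ∀ u : G, ∀ j : Fin k,
      ((if φ (u * x) = j then 1 else 0) + (if φ (u * y) = j then 1 else 0) +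
        (if φ (u * z) = j then 1 else 0) : ℕ) = A (φ u) j)
    (n : ℤ) (hPn : ∀ v : G, (pi v).q = n → φ (aa * (aa * v)) = φ v)
    (hOdd : ∀ w : G, (pi w).q = n + 1 → (pi w).e = true → φ (aa * (aa * w)) = φ w) :
    ∀ w : G, (pi w).q = n + 1 → (pi w).e = false → φ (aa * (aa * w)) = φ w := by
  intro w hq he
  have hw : pi w = ⟨(pi w).p, n + 1, false⟩ := MM.ext rfl hq he
  set v : G := w * x with hv_def
  have hv : pi v = ⟨(pi w).p, n + 1, true⟩ := by rw [hv_def, coord_xF hw]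
  have hwv : w = v * x := by rw [hv_def, mul_assoc, xx, mul_one]
  set v2 : G := aa * (aa * v) with hv2_def
  have pv : φ v2 = φ v := hOdd v (by rw [hv]) (by rw [hv])
  have pvy : φ (v2 * y) = φ (v * y) := by
    rw [hv2_def, sh2]
    refine hPn (v * y) ?_
    rw [coord_yT hv]; simp
  have pvz : φ (v2 * z) = φ (v * z) := by
    rw [hv2_def, sh2]
    refine hPn (v * z) ?_
    rw [coord_zT hv]; simp
  have pvx : v2 * x = aa * (aa * w) := by rw [hv2_def, sh2, ← hwv]
  have E : ∀ j, ((if φ (aa * (aa * w)) = j then 1 else 0) : ℕ) =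
      (if φ w = j then 1 else 0) := by
    intro j
    have h1 := hT v j
    have h2 := hT v2 j
    rw [pvx, pvy, pvz, pv] at h2
    rw [← hwv] at h1
    omega
  have := E (φ w)
  rw [if_pos rfl] at this
  by_cases h : φ (aa * (aa * w)) = φ w
  · exact h
  · rw [if_neg h] at this; omega

end PeriodLemma

section PeriodLemma2

variable {k : ℕ} {φ : G → Fin k} {A : Matrix (Fin k) (Fin k) ℕ}

/-- Downward propagation to even vertices. -/
lemma step_down_F
    (hT : ∀ u : G, ∀ j : Fin k,
      ((if φ (u * x) = j then 1 else 0) + (if φ (u * y) = j then 1 else 0) +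
        (if φ (u * z) = j then 1 else 0) : ℕ) = A (φ u) j)
    (n : ℤ) (hPn : ∀ v : G, (pi v).q = n → φ (aa * (aa * v)) = φ v) :
    ∀ w : G, (pi w).q = n - 1 → (pi w).e = false → φ (aa * (aa * w)) = φ w := by
  intro w hq he
  have hw : pi w = ⟨(pi w).p, n - 1, false⟩ := MM.ext rfl hq he
  set u : G := w * z with hu_def
  have hu : pi u = ⟨(pi w).p, n, true⟩ := by
    rw [hu_def, coord_zF hw]; simp
  have hwu : w = u * z := by rw [hu_def, mul_assoc, zz, mul_one]
  set u1 : G := aa * u with hu1_def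
  set u2 : G := aa * u1 with hu2_def
  set u3 : G := aa * u2 with hu3_def
  set u4 : G := aa * u3 with hu4_def
  have hu1 : pi u1 = ⟨(pi w).p + 1, n, true⟩ := coord_aa hu
  have hu2 : pi u2 = ⟨(pi w).p + 1 + 1, n, true⟩ := coord_aa hu1
  have hu3 : pi u3 = ⟨(pi w).p + 1 + 1 + 1, n, true⟩ := coord_aa hu2
  have hu4 : pi u4 = ⟨(pi w).p + 1 + 1 + 1 + 1, n, true⟩ := coord_aa hu3
  set d0 := φ (u * z) with hd0
  set d1 := φ (aa * (u * z)) with hd1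
  set d2 := φ (aa * (aa * (u * z))) with hd2
  set d3 := φ (aa * (aa * (aa * (u * z)))) with hd3
  set d4 := φ (aa * (aa * (aa * (aa * (u * z))))) with hd4
  have r1 : φ (u1 * z) = d1 := by rw [hd1, hu1_def, sh1]
  have r2 : φ (u2 * z) = d2 := by rw [hd2, hu2_def, hu1_def, sh1, sh1]
  have r3 : φ (u3 * z) = d3 := by rw [hd3, hu3_def, hu2_def, hu1_def, sh1, sh1, sh1]
  have r4 : φ (u4 * z) = d4 := by
    rw [hd4, hu4_def, hu3_def, hu2_def, hu1_def, sh1, sh1, sh1, sh1]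
  have r1y : φ (u1 * y) = d0 := by rw [hd0, hu1_def, sh1, idT hu]
  have r2y : φ (u2 * y) = d1 := by rw [hd1, hu2_def, sh1, idT hu1, hu1_def, sh1]
  have r3y : φ (u3 * y) = d2 := by
    rw [hd2, hu3_def, sh1, idT hu2, hu2_def, sh1, hu1_def, sh1]
  have r4y : φ (u4 * y) = d3 := by
    rw [hd3, hu4_def, sh1, idT hu3, hu3_def, sh1, hu2_def, sh1, hu1_def, sh1]
  have pu31 : φ u3 = φ u1 := by
    rw [hu3_def, hu2_def]; exact hPn u1 (by rw [hu1])
  have pu42 : φ u4 = φ u2 := by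
    rw [hu4_def, hu3_def]; exact hPn u2 (by rw [hu2])
  have pux31 : φ (u3 * x) = φ (u1 * x) := by
    rw [hu3_def, hu2_def, sh2]
    exact hPn (u1 * x) (by rw [coord_xT hu1])
  have pux42 : φ (u4 * x) = φ (u2 * x) := by
    rw [hu4_def, hu3_def, sh2]
    exact hPn (u2 * x) (by rw [coord_xT hu2])
  have E0 : ∀ j, ((if d0 = j then 1 else 0) + (if d1 = j then 1 else 0) : ℕ) =
      (if d2 = j then 1 else 0) + (if d3 = j then 1 else 0) := by
    intro j
    have h1 := hT u1 j
    have h2 := hT u3 j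
    rw [r1y, r1] at h1
    rw [r3y, r3, pux31, pu31] at h2
    omega
  have E1 : ∀ j, ((if d1 = j then 1 else 0) + (if d2 = j then 1 else 0) : ℕ) =
      (if d3 = j then 1 else 0) + (if d4 = j then 1 else 0) := by
    intro j
    have h1 := hT u2 j
    have h2 := hT u4 j
    rw [r2y, r2] at h1
    rw [r4y, r4, pux42, pu42] at h2
    omega
  have hkey : d2 = d0 := pl d0 d1 d2 d3 d4 E0 E1
  rw [hwu]
  exact hkey

/-- Downward propagation to odd vertices. -/
lemma step_down_T
    (hT : ∀ u : G, ∀ j : Fin k,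
      ((if φ (u * x) = j then 1 else 0) + (if φ (u * y) = j then 1 else 0) +
        (if φ (u * z) = j then 1 else 0) : ℕ) = A (φ u) j)
    (n : ℤ) (hPn : ∀ v : G, (pi v).q = n → φ (aa * (aa * v)) = φ v)
    (hEv : ∀ w : G, (pi w).q = n - 1 → (pi w).e = false → φ (aa * (aa * w)) = φ w) :
    ∀ w : G, (pi w).q = n - 1 → (pi w).e = true → φ (aa * (aa * w)) = φ w := by
  intro w hq he
  have hw : pi w = ⟨(pi w).p, n - 1, true⟩ := MM.ext rfl hq he
  set v : G := w * x with hv_def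
  have hv : pi v = ⟨(pi w).p, n - 1, false⟩ := by rw [hv_def, coord_xT hw]
  have hwv : w = v * x := by rw [hv_def, mul_assoc, xx, mul_one]
  set v2 : G := aa * (aa * v) with hv2_def
  have pv : φ v2 = φ v := hEv v (by rw [hv]) (by rw [hv])
  have pvy : φ (v2 * y) = φ (v * y) := by
    rw [hv2_def, sh2]
    refine hPn (v * y) ?_
    rw [coord_yF hv]; simp
  have pvz : φ (v2 * z) = φ (v * z) := by
    rw [hv2_def, sh2]
    refine hPn (v * z) ?_
    rw [coord_zF hv]; simp
  have pvx : v2 * x = aa * (aa * w) := by rw [hv2_def, sh2, ← hwv]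
  have E : ∀ j, ((if φ (aa * (aa * w)) = j then 1 else 0) : ℕ) =
      (if φ w = j then 1 else 0) := by
    intro j
    have h1 := hT v j
    have h2 := hT v2 j
    rw [pvx, pvy, pvz, pv] at h2
    rw [← hwv] at h1
    omega
  have hE := E (φ w)
  rw [if_pos rfl] at hE
  by_cases h : φ (aa * (aa * w)) = φ w
  · exact h
  · rw [if_neg h] at hE; omega

/-- Global horizontal period `a²` from `a²`-periodicity on the zigzag line. -/
lemma periodA
    (hT : ∀ u : G, ∀ j : Fin k,
      ((if φ (u * x) = j then 1 else 0) + (if φ (u * y) = j then 1 else 0) +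
        (if φ (u * z) = j then 1 else 0) : ℕ) = A (φ u) j)
    (h0 : ∀ v : G, (pi v).q = 0 → φ (aa * (aa * v)) = φ v) :
    ∀ v : G, φ (aa * (aa * v)) = φ v := by
  have main : ∀ n : ℤ, ∀ v : G, (pi v).q = n → φ (aa * (aa * v)) = φ v := by
    intro n
    induction n using Int.induction_on with
    | zero => exact h0
    | succ i ih =>
        intro v hv
        cases he : (pi v).e
        · exact step_up_F hT i ih (step_up_T hT i ih) v hv he
        · exact step_up_T hT i ih v hv he
    | pred i ih =>
        intro v hv
        have hv' : (pi v).q = (-↑i : ℤ) - 1 := by omega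
        cases he : (pi v).e
        · exact step_down_F hT (-↑i) ih v hv' he
        · exact step_down_T hT (-↑i) ih (step_down_F hT (-↑i) ih) v hv' he
  intro v
  exact main (pi v).q v rfl

end PeriodLemma2

lemma translate_perfect {k : ℕ} {φ : G → Fin k} {A : Matrix (Fin k) (Fin k) ℕ}
    (h : IsPerfectColoring φ A) (g : G) :
    IsPerfectColoring (fun v => φ (g * v)) A := by
  rw [perfect_iff] at h ⊢
  intro u j
  have hh := h (g * u) j
  simpa [mul_assoc] using hh

lemma pi_bb_pow : ∀ t : ℕ, pi (bb ^ t) = ⟨0, t, false⟩ := by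
  intro t
  induction t with
  | zero => simp only [pow_zero, map_one]; rfl
  | succ i ih =>
      rw [pow_succ, map_mul, ih, pi_bb, MM.mul_def]
      simp [sg]

lemma q_bb_pow_mul (t : ℕ) (w : G) : (pi (bb ^ t * w)).q = (t : ℤ) + (pi w).q := by
  rw [map_mul, pi_bb_pow, MM.mul_def]
  simp [sg]

section Shear

variable {k : ℕ} {φ : G → Fin k} {A : Matrix (Fin k) (Fin k) ℕ}

lemma shear_perfect
    (hT : ∀ u : G, ∀ j : Fin k,
      ((if φ (u * x) = j then 1 else 0) + (if φ (u * y) = j then 1 else 0) +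
        (if φ (u * z) = j then 1 else 0) : ℕ) = A (φ u) j)
    (hA2 : ∀ v, φ (aa * (aa * v)) = φ v) (c : ℤ)
    (ψ : G → Fin k) (hψ : ∀ v, ψ v = if c ≤ (pi v).q then φ (aa * v) else φ v) :
    ∀ u : G, ∀ j : Fin k,
      ((if ψ (u * x) = j then 1 else 0) + (if ψ (u * y) = j then 1 else 0) +
        (if ψ (u * z) = j then 1 else 0) : ℕ) = A (ψ u) j := by
  intro u j
  rw [hψ (u * x), hψ (u * y), hψ (u * z), hψ u]
  cases he : (pi u).e
  · have hu : pi u = ⟨(pi u).p, (pi u).q, false⟩ := MM.ext rfl rfl he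
    have hqx : (pi (u * x)).q = (pi u).q := by rw [coord_xF hu]
    have hqy : (pi (u * y)).q = (pi u).q + 1 := by rw [coord_yF hu]
    have hqz : (pi (u * z)).q = (pi u).q + 1 := by rw [coord_zF hu]
    rw [hqx, hqy, hqz]
    by_cases h1 : c ≤ (pi u).q
    · rw [if_pos h1, if_pos (show c ≤ (pi u).q + 1 by omega),
        if_pos (show c ≤ (pi u).q + 1 by omega), if_pos h1]
      have hh := hT (aa * u) j
      rw [sh1, sh1, sh1] at hh
      exact hh
    · by_cases h2 : c ≤ (pi u).q + 1
      · rw [if_neg h1, if_pos h2, if_pos h2, if_neg h1]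
        have e1 : φ (aa * (u * z)) = φ (u * y) := by rw [idF hu]
        have e2 : φ (aa * (u * y)) = φ (u * z) := by rw [← idF hu, hA2]
        rw [e1, e2]
        have hh := hT u j
        omega
      · rw [if_neg h1, if_neg h2, if_neg h2, if_neg h1]
        exact hT u j
  · have hu : pi u = ⟨(pi u).p, (pi u).q, true⟩ := MM.ext rfl rfl he
    have hqx : (pi (u * x)).q = (pi u).q := by rw [coord_xT hu]
    have hqy : (pi (u * y)).q = (pi u).q - 1 := by rw [coord_yT hu]
    have hqz : (pi (u * z)).q = (pi u).q - 1 := by rw [coord_zT hu]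
    rw [hqx, hqy, hqz]
    by_cases h1 : c ≤ (pi u).q - 1
    · rw [if_pos (show c ≤ (pi u).q by omega), if_pos h1, if_pos h1,
        if_pos (show c ≤ (pi u).q by omega)]
      have hh := hT (aa * u) j
      rw [sh1, sh1, sh1] at hh
      exact hh
    · by_cases h2 : c ≤ (pi u).q
      · rw [if_pos h2, if_neg h1, if_neg h1, if_pos h2]
        have e1 : φ (aa * (u * y)) = φ (u * z) := by rw [idT hu]
        have e2 : φ (aa * (u * z)) = φ (u * y) := by rw [← idT hu, hA2]
        have hh := hT (aa * u) j
        rw [sh1, sh1, sh1, e1, e2] at hh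
        omega
      · rw [if_neg h2, if_neg h1, if_neg h1, if_neg h2]
        exact hT u j

end Shear

/-- If a perfect coloring is `(y·z)²`-periodic on the double line `X` but `y·z` is not a
period of the whole coloring, then there are infinitely many perfect colorings with the
same parameter matrix. -/
theorem infinitely_many_colorings {k : ℕ} (φ : G → Fin k) (A : Matrix (Fin k) (Fin k) ℕ)
    (hφ : IsPerfectColoring φ A)
    (hX : ∀ v ∈ Xline, φ ((y * z) * (y * z) * v) = φ v)
    (hnp : ∃ w : G, φ ((y * z) * w) ≠ φ w) :
    {ψ : G → Fin k | IsPerfectColoring ψ A}.Infinite := by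
  classical
  by_cases hinf : {ψ : G → Fin k | IsPerfectColoring ψ A}.Infinite
  · exact hinf
  exfalso
  have hT := (perfect_iff φ A).mp hφ
  -- Step 1: the zigzag line is a²-periodic, hence the whole colouring is.
  have h0 : ∀ v : G, (pi v).q = 0 → φ (aa * (aa * v)) = φ v := by
    intro v hv
    have hrv : rho (pi v) = v := rho_pi v
    have hvX : v ∈ Xline := by
      cases he : (pi v).e
      · refine ⟨(pi v).p, Or.inl ?_⟩
        have hpv : pi v = ⟨(pi v).p, 0, false⟩ := MM.ext rfl hv he
        conv_lhs => rw [← hrv, hpv]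
        show aa ^ (pi v).p * bb ^ (0 : ℤ) * (cond false x 1) = (y * z) ^ (pi v).p
        simp [aa]
      · refine ⟨(pi v).p, Or.inr ?_⟩
        have hpv : pi v = ⟨(pi v).p, 0, true⟩ := MM.ext rfl hv he
        conv_lhs => rw [← hrv, hpv]
        show aa ^ (pi v).p * bb ^ (0 : ℤ) * (cond true x 1) = (y * z) ^ (pi v).p * x
        simp [aa]
    have hh := hX v hvX
    show φ ((y * z) * ((y * z) * v)) = φ v
    rw [← mul_assoc]
    exact hh
  have hA2 : ∀ v, φ (aa * (aa * v)) = φ v := periodA hT h0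
  -- Step 2: a vertical period from the assumed finiteness.
  have hnoninj : ¬ Function.Injective (fun n : ℕ => (fun v => φ (bb ^ n * v))) := by
    intro hinj
    exact hinf (Set.infinite_of_injective_forall_mem hinj
      (fun n => translate_perfect hφ (bb ^ n)))
  obtain ⟨n1, n2, heqf, hne⟩ := Function.not_injective_iff.mp hnoninj
  have key : ∀ {m1 m2 : ℕ}, m2 < m1 →
      ((fun v => φ (bb ^ m1 * v)) = fun v => φ (bb ^ m2 * v)) →
      ∀ v, φ (bb ^ (m1 - m2) * v) = φ v := by
    intro m1 m2 hlt hfeq v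
    have h := congrFun hfeq ((bb ^ m2)⁻¹ * v)
    beta_reduce at h
    have hpow : bb ^ m1 * ((bb ^ m2)⁻¹ * v) = bb ^ (m1 - m2) * v := by
      have hm : m1 = (m1 - m2) + m2 := by omega
      rw [hm, pow_add]
      group
      rw [show (m1 - m2) + m2 - m2 = m1 - m2 by omega]
    have hpow2 : bb ^ m2 * ((bb ^ m2)⁻¹ * v) = v := by group
    rw [hpow, hpow2] at h
    exact h
  obtain ⟨s, hs_pos, hsper⟩ : ∃ s : ℕ, 0 < s ∧ ∀ v, φ (bb ^ s * v) = φ v := by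
    rcases Ne.lt_or_gt hne with h | h
    · exact ⟨n2 - n1, by omega, key h heqf.symm⟩
    · exact ⟨n1 - n2, by omega, key h heqf⟩
  have hper : ∀ t : ℕ, ∀ v, φ (bb ^ (t * s) * v) = φ v := by
    intro t
    induction t with
    | zero => intro v; simp
    | succ i ih =>
        intro v
        rw [show (i + 1) * s = s + i * s by ring, pow_add, mul_assoc, hsper]
        exact ih v
  obtain ⟨w, hw⟩ := hnp
  have hw' : φ (aa * w) ≠ φ w := hw
  have hv_ne : ∀ t : ℕ, φ (aa * (bb ^ (t * s) * w)) ≠ φ (bb ^ (t * s) * w) := by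
    intro t h
    apply hw'
    have hcomm : aa * (bb ^ (t * s) * w) = bb ^ (t * s) * (aa * w) := by
      rw [← mul_assoc, ← mul_assoc]
      congr 1
      exact (comm_ab.pow_right (t * s)).eq
    rw [hcomm, hper t (aa * w), hper t w] at h
    exact h
  -- Step 3: the shear family.
  set q0 : ℤ := (pi w).q with hq0
  set F : ℕ → (G → Fin k) :=
    fun n => fun v => if (q0 + 1 + (n * s : ℕ) : ℤ) ≤ (pi v).q then φ (aa * v) else φ v
    with hF_def
  have hF : ∀ n, IsPerfectColoring (F n) A := by
    intro n
    rw [perfect_iff]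
    exact shear_perfect hT hA2 _ (F n) (fun v => rfl)
  have key2 : ∀ {n m : ℕ}, n < m → F n ≠ F m := by
    intro n m hlt hfeq
    set v : G := bb ^ ((n + 1) * s) * w with hv_def
    have hqv : (pi v).q = ((n + 1) * s : ℕ) + q0 := q_bb_pow_mul _ w
    have hcn : (q0 + 1 + (n * s : ℕ) : ℤ) ≤ (pi v).q := by
      rw [hqv]
      have e1 : ((n + 1) * s : ℕ) = n * s + s := by ring
      rw [e1]
      push_cast
      omega
    have hcm : ¬ ((q0 + 1 + (m * s : ℕ) : ℤ) ≤ (pi v).q) := by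
      rw [hqv]
      have e1 : ((n + 1) * s : ℕ) = n * s + s := by ring
      have e2 : n * s + s ≤ m * s := by
        calc n * s + s = (n + 1) * s := by ring
          _ ≤ m * s := Nat.mul_le_mul_right s (by omega)
      rw [e1]
      push_cast
      push_cast at e2
      omega
    have h1 : F n v = φ (aa * v) := by
      rw [hF_def]
      exact if_pos hcn
    have h2 : F m v = φ v := by
      rw [hF_def]
      exact if_neg hcm
    rw [hfeq, h2] at h1
    exact hv_ne (n + 1) (h1.symm)
  have hinj2 : Function.Injective F := by
    intro n m h
    by_contra hne2
    rcases Ne.lt_or_gt hne2 with hlt | hlt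
    · exact key2 hlt h
    · exact key2 hlt h.symm
  exact hinf (Set.infinite_of_injective_forall_mem hinj2 hF)

end HexGrid
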